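/- arXiv:2106.10585 — 2 statements merged into one kernel-verified Lean document; each statement's English description precedes it below -/
import Mathlib

section
/- The map ω(z₁, z₂) = (√(2z₁), √(z₂)), where √ denotes the principal branch of the complex square root, maps the Siegel half space ℍ² = {(z₁, z₂) ∈ ℂ² : Re z₁ > |z₂|²} into itself: if Re z₁ > |z₂|², then Re √(2z₁) > |√(z₂)|². -/
open Complex

/-- the map `ω(z₁, z₂) = (√(2z₁), √z₂)` (principal square roots) maps
the Siegel half space into itself: if `Re z₁ > |z₂|²` then `Re √(2z₁) > |√z₂|²`. -/
theorem omega_maps_siegel_to_siegel (z₁ z₂ : ℂ)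
    (h : ‖z₂‖ ^ 2 < z₁.re) :
    ‖z₂ ^ ((1 : ℂ) / 2)‖ ^ 2 < ((2 * z₁) ^ ((1 : ℂ) / 2)).re := by
  set s := (2 * z₁) ^ ((1 : ℂ) / 2) with hs
  -- |z₂ ^ (1/2)|² = |z₂|
  have habs : ‖z₂ ^ ((1 : ℂ) / 2)‖ ^ 2 = ‖z₂‖ := by
    have : ((1 : ℂ) / 2) = ((1 / 2 : ℝ) : ℂ) := by norm_num
    rw [this, Complex.norm_cpow_real, ← Real.rpow_natCast _ 2,
      ← Real.rpow_mul (norm_nonneg _)]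
    norm_num
  -- Re s ≥ 0
  have hre : 0 ≤ s.re := by
    have : ((1 : ℂ) / 2) = ((1 / 2 : ℝ) : ℂ) := by norm_num
    rw [hs, this, Complex.cpow_ofReal_re]
    apply mul_nonneg (Real.rpow_nonneg (norm_nonneg _) _)
    apply Real.cos_nonneg_of_mem_Icc
    constructor
    · nlinarith [Complex.neg_pi_lt_arg (2 * z₁), Real.pi_pos]
    · nlinarith [Complex.arg_le_pi (2 * z₁)]
  -- s² = 2z₁
  have hsq : s ^ 2 = 2 * z₁ := by
    have h2 : ((1:ℂ)/2) = (((2:ℕ):ℂ))⁻¹ := by norm_num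
    rw [hs, h2]
    exact Complex.cpow_nat_inv_pow _ (by norm_num)
  have hre2 : s.re ^ 2 - s.im ^ 2 = 2 * z₁.re := by
    have := congrArg Complex.re hsq
    simp [pow_two, Complex.mul_re] at this
    linarith
  have habsnn : 0 ≤ ‖z₂‖ := norm_nonneg _
  have hlt : ‖z₂‖ ^ 2 < s.re ^ 2 := by nlinarith
  rw [habs]
  exact lt_of_pow_lt_pow_left₀ 2 hre hlt
end

section
/- The linear fractional map φ(z₁, z₂) = ((z₁ + 2z₂ + 1)/(−z₁ + 2z₂ + 3), (−2z₁ + 2z₂ + 2)/(−z₁ + 2z₂ + 3)) maps the open unit ball 𝔹₂ = {(z₁, z₂) ∈ ℂ² : |z₁|² + |z₂|² < 1} into itself: for every (z₁, z₂) ∈ 𝔹₂, the denominator −z₁ + 2z₂ + 3 is nonzero and φ(z₁, z₂) ∈ 𝔹₂. Moreover φ(1, 0) = (1, 0), i.e. (1, 0) is a fixed point of φ on the boundary. -/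
/-- the linear fractional map
`φ(z₁, z₂) = ((z₁+2z₂+1)/(-z₁+2z₂+3), (-2z₁+2z₂+2)/(-z₁+2z₂+3))` maps the open unit
ball `𝔹₂` into itself (the denominator being nonzero on `𝔹₂`), and fixes the boundary
point `(1, 0)`. -/
theorem lfm_example_maps_ball_to_ball :
    (∀ z₁ z₂ : ℂ, ‖z₁‖ ^ 2 + ‖z₂‖ ^ 2 < 1 →
      (-z₁ + 2 * z₂ + 3 ≠ 0 ∧
        ‖(z₁ + 2 * z₂ + 1) / (-z₁ + 2 * z₂ + 3)‖ ^ 2 +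
          ‖(-2 * z₁ + 2 * z₂ + 2) / (-z₁ + 2 * z₂ + 3)‖ ^ 2 < 1)) ∧
    ((((1 : ℂ) + 2 * 0 + 1) / (-(1 : ℂ) + 2 * 0 + 3),
      ((-2 : ℂ) * 1 + 2 * 0 + 2) / (-(1 : ℂ) + 2 * 0 + 3)) = ((1 : ℂ), (0 : ℂ))) := by
  constructor
  · intro z₁ z₂ h
    rw [Complex.sq_norm, Complex.sq_norm] at h
    have key : Complex.normSq (z₁ + 2 * z₂ + 1) + Complex.normSq (-2 * z₁ + 2 * z₂ + 2)
        + 4 * (1 - Complex.normSq z₁ - Complex.normSq z₂)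
        = Complex.normSq (-z₁ + 2 * z₂ + 3) := by
      simp [Complex.normSq_apply]; ring
    have h1 : Complex.normSq (z₁ + 2 * z₂ + 1) ≥ 0 := Complex.normSq_nonneg _
    have h2 : Complex.normSq (-2 * z₁ + 2 * z₂ + 2) ≥ 0 := Complex.normSq_nonneg _
    have hd : Complex.normSq (-z₁ + 2 * z₂ + 3) > 0 := by linarith
    have hdne : -z₁ + 2 * z₂ + 3 ≠ 0 := by
      intro h0
      rw [h0, Complex.normSq_zero] at hd
      exact lt_irrefl 0 hd
    refine ⟨hdne, ?_⟩
    rw [norm_div, norm_div, div_pow, div_pow, ← add_div, div_lt_one (by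
      rw [Complex.sq_norm]; exact hd)]
    rw [Complex.sq_norm, Complex.sq_norm, Complex.sq_norm]
    linarith
  · norm_num
end
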